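/- The function P_{x_r}(x,t) = c_{q,ν}² ∫_0^∞ e^{-t y²} j_ν(xy,q²) j_ν(x_r y,q²) y^{2ν+1} d_q y satisfies the q-Fokker–Planck equation ∂P_{x_r}(x,t)/∂t = Δ_{q,ν} P_{x_r}(x,t) for all x ∈ R_q and t > 0. -/

import Mathlib

open scoped BigOperators
noncomputable section

/-- Infinite q-Pochhammer symbol `(a;q)_∞`. -/
def qPochInf (a q : ℝ) : ℝ := ∏' k : ℕ, (1 - a * q ^ k)

/-- Finite q-Pochhammer symbol `(a;q)_n`. -/
def qPochFin (a q : ℝ) (n : ℕ) : ℝ := ∏ k ∈ Finset.range n, (1 - a * q ^ k)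

/-- Normalized q-Bessel function `j_ν(x, q²)`. -/
def jnu (q ν x : ℝ) : ℝ :=
  ∑' n : ℕ, (-1 : ℝ) ^ n * q ^ (n * (n + 1)) * x ^ (2 * n) /
    (qPochFin (q ^ (2 * ν + 2)) (q ^ 2) n * qPochFin (q ^ 2) (q ^ 2) n)

/-- q-Jackson integral on `(0,∞)`. -/
def qInt (q : ℝ) (f : ℝ → ℝ) : ℝ := (1 - q) * ∑' n : ℤ, q ^ n * f (q ^ n)

/-- The constant `c_{q,ν}`. -/
def cq (q ν : ℝ) : ℝ :=
  qPochInf (q ^ (2 * ν + 2)) (q ^ 2) / ((1 - q) * qPochInf (q ^ 2) (q ^ 2))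

/-- q-Bessel Fourier transform `F_{q,ν}`. -/
def qFT (q ν : ℝ) (f : ℝ → ℝ) (x : ℝ) : ℝ :=
  cq q ν * qInt q (fun t => f t * jnu q ν (x * t) * t ^ (2 * ν + 1))

/-- Membership in `L^p_{q,ν}` (summability of the defining q-integral). -/
def qMemLp (q ν p : ℝ) (f : ℝ → ℝ) : Prop :=
  Summable (fun n : ℤ => q ^ n * |f (q ^ n)| ^ p * ((q : ℝ) ^ n) ^ (2 * ν + 1))

/-- The norm `‖f‖_{q,p,ν}`. -/
def qNorm (q ν p : ℝ) (f : ℝ → ℝ) : ℝ :=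
  (qInt q (fun x => |f x| ^ p * x ^ (2 * ν + 1))) ^ (1 / p)

/-- Inner product `⟨f,g⟩_{q,ν}`. -/
def qInner (q ν : ℝ) (f g : ℝ → ℝ) : ℝ :=
  qInt q (fun x => f x * g x * x ^ (2 * ν + 1))

/-- q-translation operator `T^ν_{q,x}`. -/
def qTrans (q ν x : ℝ) (f : ℝ → ℝ) (y : ℝ) : ℝ :=
  cq q ν * qInt q (fun t => qFT q ν f t * jnu q ν (y * t) * jnu q ν (x * t) * t ^ (2 * ν + 1))

/-- q-convolution product `f *_q g = F_{q,ν}[F_{q,ν}f × F_{q,ν}g]`. -/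
def qConv (q ν : ℝ) (f g : ℝ → ℝ) : ℝ → ℝ :=
  qFT q ν (fun t => qFT q ν f t * qFT q ν g t)

/-- q-Bessel operator `Δ_{q,ν}`. -/
def qBesselOp (q ν : ℝ) (f : ℝ → ℝ) (x : ℝ) : ℝ :=
  (f (x / q) - (1 + q ^ (2 * ν)) * f x + q ^ (2 * ν) * f (q * x)) / x ^ 2
set_option linter.unusedSectionVars false

namespace QFP


lemma weierstrass (x : ℕ → ℝ) (h0 : ∀ k, 0 ≤ x k) (h1 : ∀ k, x k ≤ 1) (n : ℕ) :
    1 - ∑ k ∈ Finset.range n, x k ≤ ∏ k ∈ Finset.range n, (1 - x k) := by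
  induction n with
  | zero => simp
  | succ n ih =>
    rw [Finset.prod_range_succ, Finset.sum_range_succ]
    have hs : 0 ≤ ∑ k ∈ Finset.range n, x k := Finset.sum_nonneg fun k _ => h0 k
    nlinarith [h0 n, h1 n, mul_le_mul_of_nonneg_right ih (by linarith [h1 n] : (0:ℝ) ≤ 1 - x n)]

lemma exp_key (k P : ℕ) : (P:ℤ) + ((k - P : ℕ) : ℤ) ≤ ((k:ℤ) - P)^2 + k := by
  rcases le_or_gt k P with h | h
  · have h0 : ((k - P : ℕ) : ℤ) = 0 := by
      have : k - P = 0 := by omega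
      simp [this]
    rw [h0]
    nlinarith [sq_nonneg ((k:ℤ) - P), (by omega : (0:ℤ) ≤ (P:ℤ) - k)]
  · have h0 : ((k - P : ℕ) : ℤ) = (k:ℤ) - P := by omega
    rw [h0]
    nlinarith [sq_nonneg ((k:ℤ) - P)]

lemma poch_pos {a Q : ℝ} (hQ0 : 0 ≤ Q) (hQ1 : Q ≤ 1) (ha0 : 0 ≤ a) (ha1 : a < 1) (n : ℕ) :
    0 < qPochFin a Q n := by
  apply Finset.prod_pos
  intro k _
  have h1 : a * Q ^ k ≤ a * 1 :=
    mul_le_mul_of_nonneg_left (pow_le_one₀ hQ0 hQ1) ha0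
  linarith

lemma poch_le_one {a Q : ℝ} (hQ0 : 0 ≤ Q) (hQ1 : Q ≤ 1) (ha0 : 0 ≤ a) (ha1 : a < 1) (n : ℕ) :
    qPochFin a Q n ≤ 1 := by
  apply Finset.prod_le_one
  · intro k _
    have h1 : a * Q ^ k ≤ a * 1 := mul_le_mul_of_nonneg_left (pow_le_one₀ hQ0 hQ1) ha0
    linarith
  · intro k _
    have h1 : 0 ≤ a * Q ^ k := mul_nonneg ha0 (pow_nonneg hQ0 k)
    linarith

lemma poch_lb {a Q : ℝ} (hQ0 : 0 < Q) (hQ1 : Q < 1) (ha0 : 0 ≤ a) (ha1 : a < 1) :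
    ∃ c > 0, ∀ n, c ≤ qPochFin a Q n := by
  obtain ⟨K, hK⟩ : ∃ K, Q ^ K < (1 - Q) / 2 :=
    exists_pow_lt_of_lt_one (by linarith) hQ1
  have hfac : ∀ k : ℕ, 1 - a ≤ 1 - a * Q ^ k := by
    intro k
    have : a * Q ^ k ≤ a * 1 := mul_le_mul_of_nonneg_left (pow_le_one₀ hQ0.le hQ1.le) ha0
    linarith
  have h1a : (0:ℝ) < 1 - a := by linarith
  have hpow : ∀ n : ℕ, (1 - a) ^ n ≤ qPochFin a Q n := by
    intro n
    calc (1 - a) ^ n = ∏ _k ∈ Finset.range n, (1 - a) := by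
          rw [Finset.prod_const, Finset.card_range]
      _ ≤ qPochFin a Q n :=
          Finset.prod_le_prod (fun k _ => h1a.le) (fun k _ => hfac k)
  refine ⟨(1 - a) ^ K * (1 / 2), by positivity, fun n => ?_⟩
  rcases le_or_gt n K with h | h
  · have h2 : (1 - a) ^ K ≤ (1 - a) ^ n := pow_le_pow_of_le_one h1a.le (by linarith) h
    have h3 : (0:ℝ) ≤ (1 - a) ^ K := by positivity
    nlinarith [hpow n]
  · have hn : n = K + (n - K) := by omega
    have hsplit : qPochFin a Q n
        = qPochFin a Q K * ∏ j ∈ Finset.range (n - K), (1 - a * Q ^ (K + j)) := by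
      calc qPochFin a Q n = ∏ k ∈ Finset.range (K + (n - K)), (1 - a * Q ^ k) := by
            rw [← hn]; rfl
        _ = _ := Finset.prod_range_add _ _ _
    have htail : (1:ℝ)/2 ≤ ∏ j ∈ Finset.range (n - K), (1 - a * Q ^ (K + j)) := by
      have hW := weierstrass (fun j => a * Q ^ (K + j))
        (fun j => mul_nonneg ha0 (pow_nonneg hQ0.le _))
        (fun j => by
          show a * Q ^ (K + j) ≤ 1
          have h1 : a * Q ^ (K + j) ≤ a * 1 :=
            mul_le_mul_of_nonneg_left (pow_le_one₀ hQ0.le hQ1.le) ha0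
          linarith) (n - K)
      have hsum : ∑ j ∈ Finset.range (n - K), a * Q ^ (K + j) ≤ 1/2 := by
        have he : ∑ j ∈ Finset.range (n - K), a * Q ^ (K + j)
            = a * Q ^ K * ∑ j ∈ Finset.range (n - K), Q ^ j := by
          rw [Finset.mul_sum]
          congr 1; funext j; rw [pow_add]; ring
        have hgeom : ∑ j ∈ Finset.range (n - K), Q ^ j ≤ 1 / (1 - Q) := by
          rw [geom_sum_eq hQ1.ne]
          have he2 : (Q ^ (n - K) - 1) / (Q - 1) = (1 - Q ^ (n - K)) / (1 - Q) := by
            rw [← neg_div_neg_eq]; ring_nf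
          rw [he2]
          gcongr
          · have : 0 ≤ Q ^ (n - K) := by positivity
            linarith
        have haq : 0 ≤ a * Q ^ K := by positivity
        have h4 : a * Q ^ K * ∑ j ∈ Finset.range (n - K), Q ^ j
            ≤ a * Q ^ K * (1 / (1 - Q)) := by
          exact mul_le_mul_of_nonneg_left hgeom haq
        have h5 : a * Q ^ K * (1 / (1 - Q)) ≤ 1/2 := by
          have h6 : a * Q ^ K ≤ Q ^ K := by
            nlinarith [pow_nonneg hQ0.le K]
          have h7 : a * Q ^ K ≤ (1 - Q)/2 := by linarith
          rw [mul_one_div, div_le_iff₀ (by linarith : (0:ℝ) < 1 - Q)] at *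
          nlinarith
        linarith [he ▸ (h4.trans h5)]
      linarith [hW, hsum]
    calc (1 - a) ^ K * (1/2)
        ≤ qPochFin a Q K * ∏ j ∈ Finset.range (n - K), (1 - a * Q ^ (K + j)) :=
          mul_le_mul (hpow K) htail (by norm_num) (poch_pos hQ0.le hQ1.le ha0 ha1 K).le
      _ = qPochFin a Q n := hsplit.symm



set_option linter.unusedSectionVars false

/-- series coefficient of `jnu`. -/
def Jc (q ν : ℝ) (k : ℕ) : ℝ :=
  (-1 : ℝ) ^ k * q ^ (k * (k + 1)) /
    (qPochFin (q ^ (2 * ν + 2)) (q ^ 2) k * qPochFin (q ^ 2) (q ^ 2) k)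

lemma jnu_eq (q ν x : ℝ) : jnu q ν x = ∑' k : ℕ, Jc q ν k * x ^ (2 * k) := by
  unfold jnu Jc
  exact tsum_congr fun k => by ring

variable {q ν : ℝ}

section basic
variable (hq : 0 < q) (hq1 : q < 1) (hν : -1 < ν)
include hq hq1 hν

lemma ha01 : 0 ≤ q ^ (2 * ν + 2) ∧ q ^ (2 * ν + 2) < 1 :=
  ⟨Real.rpow_nonneg hq.le _, Real.rpow_lt_one hq.le hq1 (by linarith)⟩

lemma hQ01 : 0 < q ^ 2 ∧ q ^ 2 < 1 := ⟨by positivity, by nlinarith⟩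

lemma pochA_pos (k : ℕ) : 0 < qPochFin (q ^ (2 * ν + 2)) (q ^ 2) k :=
  poch_pos (hQ01 hq hq1 hν).1.le (hQ01 hq hq1 hν).2.le (ha01 hq hq1 hν).1 (ha01 hq hq1 hν).2 k

lemma pochB_pos (k : ℕ) : 0 < qPochFin (q ^ 2) (q ^ 2) k :=
  poch_pos (hQ01 hq hq1 hν).1.le (hQ01 hq hq1 hν).2.le (hQ01 hq hq1 hν).1.le (hQ01 hq hq1 hν).2 k

/-- uniform positive lower bound for the product of the two Pochhammer denominators. -/
lemma poch_prod_lb :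
    ∃ c > 0, ∀ k, c ≤ qPochFin (q ^ (2 * ν + 2)) (q ^ 2) k * qPochFin (q ^ 2) (q ^ 2) k := by
  obtain ⟨c1, hc1, h1⟩ := poch_lb (hQ01 hq hq1 hν).1 (hQ01 hq hq1 hν).2
    (ha01 hq hq1 hν).1 (ha01 hq hq1 hν).2
  obtain ⟨c2, hc2, h2⟩ := poch_lb (hQ01 hq hq1 hν).1 (hQ01 hq hq1 hν).2
    (hQ01 hq hq1 hν).1.le (hQ01 hq hq1 hν).2
  exact ⟨c1 * c2, by positivity, fun k =>
    mul_le_mul (h1 k) (h2 k) hc2.le (pochA_pos hq hq1 hν k).le⟩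

lemma Jc_abs (k : ℕ) :
    |Jc q ν k| = q ^ (k * (k + 1)) /
      (qPochFin (q ^ (2 * ν + 2)) (q ^ 2) k * qPochFin (q ^ 2) (q ^ 2) k) := by
  unfold Jc
  rw [abs_div, abs_mul, abs_pow, abs_neg, abs_one, one_pow, one_mul, abs_pow, abs_of_pos hq,
    abs_of_pos (mul_pos (pochA_pos hq hq1 hν k) (pochB_pos hq hq1 hν k))]

/-- `q^{k(k+1)} y^k` is summable for any `y`. -/
lemma summable_qsq (y : ℝ) : Summable (fun k : ℕ => q ^ (k * (k + 1)) * y ^ k) := by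
  apply summable_of_ratio_norm_eventually_le (r := 1/2) (by norm_num)
  have htend : Filter.Tendsto (fun k : ℕ => q ^ (2 * (k + 1)) * |y|) Filter.atTop (nhds 0) := by
    have h1 : Filter.Tendsto (fun k : ℕ => (q ^ 2 : ℝ) ^ (k + 1)) Filter.atTop (nhds 0) :=
      (tendsto_pow_atTop_nhds_zero_of_lt_one (by positivity) (hQ01 hq hq1 hν).2).comp
        (Filter.tendsto_add_atTop_nat 1)
    have h2 := h1.mul_const |y|
    rw [zero_mul] at h2
    exact h2.congr fun k => by rw [pow_mul]
  have hev : ∀ᶠ k : ℕ in Filter.atTop, q ^ (2 * (k + 1)) * |y| ≤ 1/2 :=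
    htend.eventually_le_const (by norm_num : (0:ℝ) < 1/2)
  filter_upwards [hev] with k hk
  simp only [Real.norm_eq_abs, abs_mul, abs_pow, abs_of_pos hq, abs_abs]
  have hexp : (k + 1) * (k + 1 + 1) = k * (k + 1) + 2 * (k + 1) := by ring
  rw [hexp, pow_add]
  calc q ^ (k * (k + 1)) * q ^ (2 * (k + 1)) * |y| ^ (k + 1)
      = (q ^ (2 * (k + 1)) * |y|) * (q ^ (k * (k + 1)) * |y| ^ k) := by rw [pow_succ]; ring
    _ ≤ (1/2) * (q ^ (k * (k + 1)) * |y| ^ k) :=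
        mul_le_mul_of_nonneg_right hk (by positivity)


lemma summable_Jc_abs (x : ℝ) : Summable (fun k : ℕ => |Jc q ν k| * x ^ (2 * k)) := by
  obtain ⟨c, hc0, hc⟩ := poch_prod_lb hq hq1 hν
  apply Summable.of_nonneg_of_le
    (fun k => mul_nonneg (abs_nonneg _) (by rw [pow_mul]; positivity))
    (fun k => ?_) ((summable_qsq hq hq1 hν (x ^ 2)).div_const c)
  have h1 : |Jc q ν k| ≤ q ^ (k * (k + 1)) / c := by
    rw [Jc_abs hq hq1 hν]
    exact div_le_div_of_nonneg_left (by positivity) hc0 (hc k)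
  calc |Jc q ν k| * x ^ (2 * k) ≤ (q ^ (k * (k + 1)) / c) * x ^ (2 * k) :=
        mul_le_mul_of_nonneg_right h1 (by rw [pow_mul]; positivity)
    _ = q ^ (k * (k + 1)) * (x ^ 2) ^ k / c := by rw [pow_mul]; ring

end basic

/-- majorant of `jnu` with absolute coefficients. -/
def Jabs (q ν x : ℝ) : ℝ := ∑' k : ℕ, |Jc q ν k| * x ^ (2 * k)

section basic2
variable (hq : 0 < q) (hq1 : q < 1) (hν : -1 < ν)
include hq hq1 hν

lemma Jabs_nonneg (x : ℝ) : 0 ≤ Jabs q ν x :=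
  tsum_nonneg fun k => mul_nonneg (abs_nonneg _) (by rw [pow_mul]; positivity)

lemma Jabs_mono {u v : ℝ} (hu : 0 ≤ u) (huv : u ≤ v) : Jabs q ν u ≤ Jabs q ν v :=
  Summable.tsum_le_tsum
    (fun k => mul_le_mul_of_nonneg_left (pow_le_pow_left₀ hu huv _) (abs_nonneg _))
    (summable_Jc_abs hq hq1 hν u) (summable_Jc_abs hq hq1 hν v)

lemma summable_jnu_term (x : ℝ) : Summable (fun k : ℕ => Jc q ν k * x ^ (2 * k)) := by
  have h : ∀ k : ℕ, |Jc q ν k * x ^ (2 * k)| = |Jc q ν k| * x ^ (2 * k) := fun k => by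
    rw [abs_mul, abs_of_nonneg (by rw [pow_mul]; positivity : (0:ℝ) ≤ x ^ (2 * k))]
  exact Summable.of_abs ((summable_Jc_abs hq hq1 hν x).congr fun k => (h k).symm)

lemma jnu_abs_le (x : ℝ) : |jnu q ν x| ≤ Jabs q ν |x| := by
  rw [jnu_eq]
  have hs : Summable fun k : ℕ => ‖Jc q ν k * x ^ (2 * k)‖ := by
    refine (summable_Jc_abs hq hq1 hν x).congr fun k => ?_
    rw [Real.norm_eq_abs, abs_mul, abs_of_nonneg (by rw [pow_mul]; positivity : (0:ℝ) ≤ x ^ (2 * k))]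
  calc |∑' k : ℕ, Jc q ν k * x ^ (2 * k)| ≤ ∑' k : ℕ, ‖Jc q ν k * x ^ (2 * k)‖ := by
        rw [← Real.norm_eq_abs]
        exact norm_tsum_le_tsum_norm hs
    _ = Jabs q ν |x| := tsum_congr fun k => by
        rw [Real.norm_eq_abs, abs_mul, abs_pow]

lemma summable_qpow_sub (P : ℕ) : Summable (fun k : ℕ => (q:ℝ) ^ (k - P)) := by
  rw [← summable_nat_add_iff P]
  simpa using summable_geometric_of_lt_one hq.le hq1

lemma tsum_qpow_sub (P : ℕ) : ∑' k : ℕ, (q:ℝ) ^ (k - P) = P + 1/(1-q) := by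
  rw [← Summable.sum_add_tsum_nat_add P (summable_qpow_sub hq hq1 hν P)]
  have h1 : ∑ k ∈ Finset.range P, (q:ℝ) ^ (k - P) = P := by
    have hc : ∀ k ∈ Finset.range P, (q:ℝ) ^ (k - P) = 1 := by
      intro k hk
      have hk0 : k - P = 0 := by
        have := Finset.mem_range.1 hk; omega
      rw [hk0, pow_zero]
    rw [Finset.sum_congr rfl hc, Finset.sum_const, Finset.card_range]
    simp
  have h2 : ∑' k : ℕ, (q:ℝ) ^ (k + P - P) = 1/(1-q) := by
    simp only [Nat.add_sub_cancel]
    rw [tsum_geometric_of_lt_one hq.le hq1, one_div]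
  rw [h1, h2]


/-- growth estimate for `Jabs` at the points `q^{-P}`. -/
lemma Jabs_zpow_bound :
    ∃ C > 0, ∀ P : ℕ, Jabs q ν ((q:ℝ) ^ (-(P:ℤ)))
      ≤ C * ((P:ℝ) + 1/(1-q)) * (q:ℝ) ^ (-(P:ℤ)^2) := by
  obtain ⟨c, hc0, hc⟩ := poch_prod_lb hq hq1 hν
  refine ⟨1/c, by positivity, fun P => ?_⟩
  have key : ∀ k : ℕ, |Jc q ν k| * ((q:ℝ)^(-(P:ℤ))) ^ (2 * k)
      ≤ (1/c) * ((q:ℝ)^(-(P:ℤ)^2) * (q:ℝ)^(k - P)) := by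
    intro k
    have h1 : |Jc q ν k| ≤ q ^ (k * (k + 1)) / c := by
      rw [Jc_abs hq hq1 hν]
      exact div_le_div_of_nonneg_left (by positivity) hc0 (hc k)
    have hzp : (0:ℝ) < (q:ℝ)^(-(P:ℤ)) := zpow_pos hq _
    have e1 : ((q:ℝ)^(-(P:ℤ))) ^ (2 * k) = (q:ℝ) ^ ((-(P:ℤ)) * (2 * k)) := by
      rw [← zpow_natCast ((q:ℝ)^(-(P:ℤ))) (2 * k), ← zpow_mul]
      norm_num
    have e2 : (q:ℝ) ^ (k * (k + 1)) = (q:ℝ) ^ ((k * (k + 1) : ℕ) : ℤ) :=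
      (zpow_natCast q _).symm
    calc |Jc q ν k| * ((q:ℝ)^(-(P:ℤ))) ^ (2 * k)
        ≤ (q ^ (k * (k + 1)) / c) * ((q:ℝ)^(-(P:ℤ))) ^ (2 * k) :=
          mul_le_mul_of_nonneg_right h1 (by positivity)
      _ = (1/c) * ((q:ℝ) ^ (((k * (k + 1) : ℕ) : ℤ) + (-(P:ℤ)) * (2 * k))) := by
          rw [zpow_add₀ hq.ne', ← e2, ← e1]; ring
      _ ≤ (1/c) * ((q:ℝ) ^ (-(P:ℤ)^2 + ((k - P : ℕ) : ℤ))) := by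
          apply mul_le_mul_of_nonneg_left _ (by positivity)
          apply zpow_le_zpow_right_of_le_one₀ hq hq1.le
          have hk := exp_key k P
          push_cast
          nlinarith [hk]
      _ = (1/c) * ((q:ℝ)^(-(P:ℤ)^2) * (q:ℝ)^(k - P)) := by
          rw [zpow_add₀ hq.ne', zpow_natCast]
  have hsum2 : Summable (fun k : ℕ => (q:ℝ)^(-(P:ℤ)^2) * (q:ℝ)^(k - P)) :=
    (summable_qpow_sub hq hq1 hν P).mul_left _
  have hsum_rhs : Summable (fun k : ℕ => (1/c) * ((q:ℝ)^(-(P:ℤ)^2) * (q:ℝ)^(k - P))) :=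
    hsum2.mul_left _
  calc Jabs q ν ((q:ℝ) ^ (-(P:ℤ)))
      ≤ ∑' k : ℕ, (1/c) * ((q:ℝ)^(-(P:ℤ)^2) * (q:ℝ)^(k - P)) :=
        Summable.tsum_le_tsum key (summable_Jc_abs hq hq1 hν _) hsum_rhs
    _ = (1/c) * ((q:ℝ)^(-(P:ℤ)^2) * ((P:ℝ) + 1/(1-q))) := by
        rw [tsum_mul_left, tsum_mul_left, tsum_qpow_sub hq hq1 hν]
    _ = (1/c) * ((P:ℝ) + 1/(1-q)) * (q:ℝ) ^ (-(P:ℤ)^2) := by ring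

lemma exists_M (X : ℝ) : ∃ M : ℕ, X ≤ (q:ℝ) ^ (-(M:ℤ)) := by
  rcases le_or_gt X 1 with h | h
  · exact ⟨0, by simpa using h⟩
  · obtain ⟨M, hM⟩ := exists_pow_lt_of_lt_one (x := 1/X) (by positivity) hq1
    refine ⟨M, ?_⟩
    have hX0 : (0:ℝ) < X := by linarith
    have hqM : (0:ℝ) < q ^ M := by positivity
    rw [zpow_neg, zpow_natCast, ← one_div, le_div_iff₀ hqM]
    have h2 := (lt_div_iff₀ hX0).mp hM
    nlinarith

open Filter in
lemma lim_linear (C : ℝ) :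
    Filter.Tendsto (fun p : ℕ => ((p:ℝ) + C) * (q^2) ^ p) Filter.atTop (nhds 0) := by
  have hr0 : (0:ℝ) ≤ q^2 := by positivity
  have hr1 : q^2 < 1 := (hQ01 hq hq1 hν).2
  have h1 : Tendsto (fun p : ℕ => (p:ℝ)^1 * (q^2)^p) atTop (nhds 0) :=
    tendsto_pow_const_mul_const_pow_of_lt_one 1 hr0 hr1
  have h2 : Tendsto (fun p : ℕ => C * (q^2)^p) atTop (nhds 0) := by
    simpa using (tendsto_pow_atTop_nhds_zero_of_lt_one hr0 hr1).const_mul C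
  have h3 := h1.add h2
  rw [add_zero] at h3
  exact h3.congr fun p => by ring

open Filter in
lemma lim_sq :
    Filter.Tendsto (fun p : ℕ => ((p:ℝ) + 1)^2 * (q^2) ^ p) Filter.atTop (nhds 0) := by
  have hr0 : (0:ℝ) ≤ q^2 := by positivity
  have hr1 : q^2 < 1 := (hQ01 hq hq1 hν).2
  have h1 : Tendsto (fun p : ℕ => (p:ℝ)^2 * (q^2)^p) atTop (nhds 0) :=
    tendsto_pow_const_mul_const_pow_of_lt_one 2 hr0 hr1
  have h2 : Tendsto (fun p : ℕ => (p:ℝ)^1 * (q^2)^p) atTop (nhds 0) :=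
    tendsto_pow_const_mul_const_pow_of_lt_one 1 hr0 hr1
  have h3 : Tendsto (fun p : ℕ => (q^2:ℝ)^p) atTop (nhds 0) :=
    tendsto_pow_atTop_nhds_zero_of_lt_one hr0 hr1
  have h4 := (h1.add ((h2.const_mul 2).add h3))
  simp only [add_zero, mul_zero, zero_add] at h4
  exact h4.congr fun p => by ring

open Filter Real in
/-- The central decay estimate: superexponentially decaying Gaussian factor beats
quadratic-exponential growth. -/
lemma decay_zero (s : ℝ) (hs : 0 < s) (A : ℤ) (M₁ M₂ : ℕ) :
    Filter.Tendsto (fun p : ℕ =>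
      ((p:ℝ) + M₁ + 1/(1-q)) * ((p:ℝ) + M₂ + 1/(1-q)) *
      (q:ℝ) ^ (A * p - ((p:ℤ) + M₁)^2 - ((p:ℤ) + M₂)^2) *
      Real.exp (-s * (q:ℝ) ^ (-2 * (p:ℤ))) / (q:ℝ) ^ (p:ℤ))
      Filter.atTop (nhds 0) := by
  set d : ℝ := 1/(1-q) with hd_def
  have hd1 : 1 ≤ d := by
    rw [hd_def, le_div_iff₀ (by linarith)]
    linarith
  set E : ℕ → ℤ := fun p => A * p - ((p:ℤ) + M₁)^2 - ((p:ℤ) + M₂)^2 with hE_def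
  set pf₁ : ℕ → ℝ := fun p => (p:ℝ) + M₁ + d with hpf₁
  set pf₂ : ℕ → ℝ := fun p => (p:ℝ) + M₂ + d with hpf₂
  have hpf₁_pos : ∀ p, 0 < pf₁ p := fun p => by
    have : (0:ℝ) ≤ (p:ℝ) + M₁ := by positivity
    simp only [hpf₁]; linarith
  have hpf₂_pos : ∀ p, 0 < pf₂ p := fun p => by
    have : (0:ℝ) ≤ (p:ℝ) + M₂ := by positivity
    simp only [hpf₂]; linarith
  have hpf₁_one : ∀ p, 1 ≤ pf₁ p := fun p => by
    have : (0:ℝ) ≤ (p:ℝ) + M₁ := by positivity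
    simp only [hpf₁]; linarith
  have hpf₂_one : ∀ p, 1 ≤ pf₂ p := fun p => by
    have : (0:ℝ) ≤ (p:ℝ) + M₂ := by positivity
    simp only [hpf₂]; linarith
  set h : ℕ → ℝ := fun p =>
    Real.log (pf₁ p) + Real.log (pf₂ p) + (((E p : ℤ) : ℝ) - p) * Real.log q
      - s * (q:ℝ) ^ (-2 * (p:ℤ)) with hh_def
  -- limits of the pieces
  have t1 : Tendsto (fun p : ℕ => Real.log (pf₁ p) * (q^2)^p) atTop (nhds 0) := by
    apply squeeze_zero (fun p => mul_nonneg (Real.log_nonneg (hpf₁_one p)) (by positivity))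
      (g := fun p : ℕ => ((p:ℝ) + (M₁ + d)) * (q^2)^p) (fun p => ?_) (lim_linear hq hq1 hν _)
    apply mul_le_mul_of_nonneg_right _ (by positivity)
    have := Real.log_le_sub_one_of_pos (hpf₁_pos p)
    simp only [hpf₁] at this ⊢
    linarith
  have t2 : Tendsto (fun p : ℕ => Real.log (pf₂ p) * (q^2)^p) atTop (nhds 0) := by
    apply squeeze_zero (fun p => mul_nonneg (Real.log_nonneg (hpf₂_one p)) (by positivity))
      (g := fun p : ℕ => ((p:ℝ) + (M₂ + d)) * (q^2)^p) (fun p => ?_) (lim_linear hq hq1 hν _)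
    apply mul_le_mul_of_nonneg_right _ (by positivity)
    have := Real.log_le_sub_one_of_pos (hpf₂_pos p)
    simp only [hpf₂] at this ⊢
    linarith
  set K : ℝ := |(A:ℝ)| + 1 + ((M₁:ℝ)+1)^2 + ((M₂:ℝ)+1)^2 with hK_def
  have hK : ∀ p : ℕ, |((E p : ℤ) : ℝ) - p| ≤ K * ((p:ℝ)+1)^2 := by
    intro p
    have hp0 : (0:ℝ) ≤ (p:ℝ) := Nat.cast_nonneg p
    have hM₁0 : (0:ℝ) ≤ (M₁:ℝ) := Nat.cast_nonneg M₁
    have hM₂0 : (0:ℝ) ≤ (M₂:ℝ) := Nat.cast_nonneg M₂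
    have hA1 : (A:ℝ) ≤ |(A:ℝ)| := le_abs_self _
    have hA2 : -|(A:ℝ)| ≤ (A:ℝ) := neg_abs_le _
    have hA0 : (0:ℝ) ≤ |(A:ℝ)| := abs_nonneg _
    rw [abs_le]
    simp only [hE_def]
    push_cast
    constructor <;> nlinarith [sq_nonneg ((p:ℝ) + M₁), sq_nonneg ((p:ℝ) + M₂),
      mul_le_mul_of_nonneg_right hA1 hp0, mul_le_mul_of_nonneg_right hA2 hp0,
      sq_nonneg ((p:ℝ)+1), mul_nonneg hM₁0 hp0, mul_nonneg hM₂0 hp0,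
      mul_nonneg (mul_nonneg hM₁0 hM₁0) hp0]
  have t3 : Tendsto (fun p : ℕ => (((E p : ℤ):ℝ) - p) * Real.log q * (q^2)^p)
      atTop (nhds 0) := by
    apply squeeze_zero_norm (a := fun p : ℕ => (K * |Real.log q|) * (((p:ℝ)+1)^2 * (q^2)^p))
    · intro p
      rw [Real.norm_eq_abs, abs_mul, abs_mul]
      calc |((E p : ℤ):ℝ) - p| * |Real.log q| * |(q^2:ℝ)^p|
          ≤ (K * ((p:ℝ)+1)^2) * |Real.log q| * |(q^2:ℝ)^p| := by
            apply mul_le_mul_of_nonneg_right (mul_le_mul_of_nonneg_right (hK p)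
              (abs_nonneg _)) (abs_nonneg _)
        _ = (K * |Real.log q|) * (((p:ℝ)+1)^2 * |(q^2:ℝ)^p|) := by ring
        _ = (K * |Real.log q|) * (((p:ℝ)+1)^2 * (q^2:ℝ)^p) := by
            rw [abs_pow, abs_of_nonneg (by positivity : (0:ℝ) ≤ q^2)]
    · simpa using (lim_sq hq hq1 hν).const_mul (K * |Real.log q|)
  have hqinv : (1:ℝ) < (q^2)⁻¹ := by
    rw [lt_inv_comm₀ one_pos (by positivity)]
    simpa using (hQ01 hq hq1 hν).2
  have hbase : Tendsto (fun p : ℕ => ((q^2:ℝ)⁻¹)^p) atTop atTop :=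
    tendsto_pow_atTop_atTop_of_one_lt hqinv
  have hzpow_eq : ∀ p : ℕ, ((q^2:ℝ)⁻¹)^p = (q:ℝ) ^ (-2 * (p:ℤ)) := by
    intro p
    rw [inv_pow, ← pow_mul, ← zpow_natCast (q:ℝ) (2*p), ← zpow_neg]
    norm_num
  have hbase' : Tendsto (fun p : ℕ => (q:ℝ) ^ (-2 * (p:ℤ))) atTop atTop :=
    hbase.congr fun p => hzpow_eq p
  set w : ℕ → ℝ := fun p =>
    (Real.log (pf₁ p) + Real.log (pf₂ p) + (((E p : ℤ):ℝ) - p) * Real.log q) * (q^2)^p - s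
    with hw_def
  have hw : Tendsto w atTop (nhds (-s)) := by
    have h4 := ((t1.add t2).add t3)
    rw [add_zero, add_zero] at h4
    have h5 := h4.sub_const s
    rw [zero_sub] at h5
    exact h5.congr fun p => by simp only [hw_def]; ring
  have htb : Tendsto h atTop atBot := by
    have := hbase'.atTop_mul_neg (by linarith : -s < 0) hw
    apply this.congr fun p => ?_
    simp only [hh_def, hw_def]
    have hcancel : (q:ℝ) ^ (-2 * (p:ℤ)) * (q^2)^p = 1 := by
      rw [← hzpow_eq p]
      rw [← mul_pow, inv_mul_cancel₀ (by positivity), one_pow]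
    calc (q:ℝ) ^ (-2*(p:ℤ)) * ((Real.log (pf₁ p) + Real.log (pf₂ p)
          + (((E p : ℤ):ℝ) - p) * Real.log q) * (q^2)^p - s)
        = (Real.log (pf₁ p) + Real.log (pf₂ p) + (((E p : ℤ):ℝ) - p) * Real.log q)
            * ((q:ℝ) ^ (-2*(p:ℤ)) * (q^2)^p) - s * (q:ℝ)^(-2*(p:ℤ)) := by ring
      _ = _ := by rw [hcancel]; ring
  have hexp : Tendsto (fun p => Real.exp (h p)) atTop (nhds 0) :=
    Real.tendsto_exp_atBot.comp htb
  apply hexp.congr fun p => ?_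
  -- pointwise identity
  have e1 : Real.exp (h p) = pf₁ p * pf₂ p * Real.exp ((((E p : ℤ):ℝ) - p) * Real.log q)
      * Real.exp (-s * (q:ℝ)^(-2*(p:ℤ))) := by
    simp only [hh_def]
    rw [show Real.log (pf₁ p) + Real.log (pf₂ p) + (((E p : ℤ):ℝ) - p) * Real.log q
        - s * (q:ℝ)^(-2*(p:ℤ)) = Real.log (pf₁ p) + (Real.log (pf₂ p)
        + ((((E p : ℤ):ℝ) - p) * Real.log q + (- s * (q:ℝ)^(-2*(p:ℤ))))) from by ring,
      Real.exp_add, Real.exp_add, Real.exp_add, Real.exp_log (hpf₁_pos p),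
      Real.exp_log (hpf₂_pos p)]
    ring_nf
  have e2 : Real.exp ((((E p : ℤ):ℝ) - p) * Real.log q) = (q:ℝ) ^ (E p - (p:ℤ)) := by
    rw [← Real.rpow_intCast (q:ℝ) (E p - (p:ℤ)), Real.rpow_def_of_pos hq]
    congr 1
    push_cast
    ring
  rw [e1, e2, zpow_sub₀ hq.ne']
  simp only [hE_def, hpf₁, hpf₂]
  ring

end basic2

/-- dominating summand for all the q-integrals we need. -/
def dom (q ν s X Y : ℝ) (j : ℕ) (m : ℤ) : ℝ :=
  ((q:ℝ)^m)^j * ((q:ℝ)^m * Real.exp (-s * ((q:ℝ)^m)^2) * Jabs q ν (X * (q:ℝ)^m) *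
    Jabs q ν (Y * (q:ℝ)^m) * ((q:ℝ)^m) ^ (2*ν+1))

section master
variable (hq : 0 < q) (hq1 : q < 1) (hν : -1 < ν)
include hq hq1 hν

lemma dom_nonneg (s X Y : ℝ) (j : ℕ) (m : ℤ) : 0 ≤ dom q ν s X Y j m := by
  unfold dom
  have h1 := Jabs_nonneg hq hq1 hν (X * (q:ℝ)^m)
  have h2 := Jabs_nonneg hq hq1 hν (Y * (q:ℝ)^m)
  have h3 : (0:ℝ) < (q:ℝ)^m := zpow_pos hq m
  have h4 : (0:ℝ) < ((q:ℝ)^m) ^ (2*ν+1) := Real.rpow_pos_of_pos h3 _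
  positivity

lemma master_pos (j : ℕ) (X Y s : ℝ) (hX : 0 ≤ X) (hY : 0 ≤ Y) (hs : 0 < s) :
    Summable (fun k : ℕ => dom q ν s X Y j (k:ℤ)) := by
  set r : ℝ := (q:ℝ) ^ (2*ν+2 : ℝ) with hr_def
  have hr0 : 0 ≤ r := Real.rpow_nonneg hq.le _
  have hr1 : r < 1 := Real.rpow_lt_one hq.le hq1 (by linarith)
  apply Summable.of_nonneg_of_le (fun k => dom_nonneg hq hq1 hν s X Y j _) (fun k => ?_)
    ((summable_geometric_of_lt_one hr0 hr1).mul_left (Jabs q ν X * Jabs q ν Y))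
  unfold dom
  have ha : (q:ℝ)^(k:ℤ) = q^k := zpow_natCast q k
  rw [ha]
  have hqk0 : (0:ℝ) < q^k := by positivity
  have hqk1 : (q:ℝ)^k ≤ 1 := pow_le_one₀ hq.le hq1.le
  have hE1 : Real.exp (-s * ((q:ℝ)^k)^2) ≤ 1 := by
    rw [Real.exp_le_one_iff]
    nlinarith [sq_nonneg ((q:ℝ)^k)]
  have hE0 : 0 < Real.exp (-s * ((q:ℝ)^k)^2) := Real.exp_pos _
  have hJ1 : Jabs q ν (X * (q:ℝ)^k) ≤ Jabs q ν X := by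
    apply Jabs_mono hq hq1 hν (by positivity)
    nlinarith
  have hJ2 : Jabs q ν (Y * (q:ℝ)^k) ≤ Jabs q ν Y := by
    apply Jabs_mono hq hq1 hν (by positivity)
    nlinarith
  have hJ10 : 0 ≤ Jabs q ν (X * (q:ℝ)^k) := Jabs_nonneg hq hq1 hν _
  have hJ20 : 0 ≤ Jabs q ν (Y * (q:ℝ)^k) := Jabs_nonneg hq hq1 hν _
  have hJ1X : 0 ≤ Jabs q ν X := Jabs_nonneg hq hq1 hν _
  have hJ2Y : 0 ≤ Jabs q ν Y := Jabs_nonneg hq hq1 hν _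
  have hR0 : (0:ℝ) < ((q:ℝ)^k) ^ (2*ν+1) := Real.rpow_pos_of_pos hqk0 _
  have hpow1 : ((q:ℝ)^k)^j ≤ 1 := pow_le_one₀ (by positivity) hqk1
  have key : (q:ℝ)^k * ((q:ℝ)^k) ^ (2*ν+1) = r^k := by
    have h1 : (q:ℝ)^k * ((q:ℝ)^k) ^ (2*ν+1) = ((q:ℝ)^k) ^ (2*ν+2 : ℝ) := by
      have h2 := Real.rpow_add hqk0 1 (2*ν+1)
      rw [Real.rpow_one] at h2
      rw [show (2*ν+2 : ℝ) = 1 + (2*ν+1) from by ring, h2]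
    rw [h1, hr_def]
    rw [← Real.rpow_natCast (q:ℝ) k, ← Real.rpow_mul hq.le]
    rw [← Real.rpow_natCast ((q:ℝ) ^ (2*ν+2 : ℝ)) k, ← Real.rpow_mul hq.le]
    congr 1
    ring
  calc ((q:ℝ)^k)^j * ((q:ℝ)^k * Real.exp (-s * ((q:ℝ)^k)^2) * Jabs q ν (X * (q:ℝ)^k) *
        Jabs q ν (Y * (q:ℝ)^k) * ((q:ℝ)^k) ^ (2*ν+1))
      ≤ 1 * ((q:ℝ)^k * 1 * Jabs q ν X * Jabs q ν Y * ((q:ℝ)^k) ^ (2*ν+1)) := by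
        apply mul_le_mul hpow1 ?_ ?_ zero_le_one
        · gcongr
        · positivity
    _ = Jabs q ν X * Jabs q ν Y * r^k := by rw [one_mul, ← key]; ring

lemma master_neg (j : ℕ) (X Y s : ℝ) (hX : 0 ≤ X) (hY : 0 ≤ Y) (hs : 0 < s) :
    Summable (fun p : ℕ => dom q ν s X Y j (-(p:ℤ))) := by
  obtain ⟨C, hC0, hCb⟩ := Jabs_zpow_bound hq hq1 hν
  obtain ⟨M₁, hM₁⟩ := exists_M hq hq1 hν X
  obtain ⟨M₂, hM₂⟩ := exists_M hq hq1 hν Y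
  set B : ℕ := ⌈2*ν+1⌉₊ with hB_def
  have hB : (2*ν+1 : ℝ) ≤ B := Nat.le_ceil _
  set A : ℤ := -((j:ℤ) + 1 + B) with hA_def
  have htend := decay_zero hq hq1 hν s hs A M₁ M₂
  set D : ℕ → ℝ := fun p =>
    ((p:ℝ) + M₁ + 1/(1-q)) * ((p:ℝ) + M₂ + 1/(1-q)) *
      (q:ℝ) ^ (A * p - ((p:ℤ) + M₁)^2 - ((p:ℤ) + M₂)^2) *
      Real.exp (-s * (q:ℝ) ^ (-2 * (p:ℤ))) / (q:ℝ) ^ (p:ℤ) with hD_def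
  have hbd : ∀ p : ℕ, dom q ν s X Y j (-(p:ℤ)) ≤ (C*C) * (D p * (q:ℝ)^(p:ℤ)) := by
    intro p
    have hz : (0:ℝ) < (q:ℝ)^(-(p:ℤ)) := zpow_pos hq _
    have he2 : ((q:ℝ)^(-(p:ℤ)))^2 = (q:ℝ)^(-2*(p:ℤ)) := by
      rw [← zpow_natCast ((q:ℝ)^(-(p:ℤ))) 2, ← zpow_mul]
      norm_num; ring_nf
    have hone : (1:ℝ) ≤ (q:ℝ)^(-(p:ℤ)) := by
      have := zpow_le_zpow_right_of_le_one₀ hq hq1.le (by omega : -(p:ℤ) ≤ 0)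
      simpa using this
    -- bound for the rpow factor
    have hrpow : ((q:ℝ)^(-(p:ℤ))) ^ (2*ν+1) ≤ (q:ℝ) ^ (-((B:ℤ) * p)) := by
      calc ((q:ℝ)^(-(p:ℤ))) ^ (2*ν+1) ≤ ((q:ℝ)^(-(p:ℤ))) ^ (B:ℝ) :=
            Real.rpow_le_rpow_of_exponent_le hone hB
        _ = ((q:ℝ)^(-(p:ℤ)))^(B:ℕ) := Real.rpow_natCast _ B
        _ = (q:ℝ) ^ (-((B:ℤ) * p)) := by
            rw [← zpow_natCast ((q:ℝ)^(-(p:ℤ))) B, ← zpow_mul]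
            congr 1
            push_cast
            ring
    -- bounds for the two Jabs factors
    have hXb : Jabs q ν (X * (q:ℝ)^(-(p:ℤ)))
        ≤ C * (((p+M₁ : ℕ):ℝ) + 1/(1-q)) * (q:ℝ) ^ (-((p+M₁ : ℕ):ℤ)^2) := by
      refine le_trans ?_ (hCb (p + M₁))
      apply Jabs_mono hq hq1 hν (by positivity)
      calc X * (q:ℝ)^(-(p:ℤ)) ≤ (q:ℝ)^(-(M₁:ℤ)) * (q:ℝ)^(-(p:ℤ)) :=
            mul_le_mul_of_nonneg_right hM₁ hz.le
        _ = (q:ℝ)^(-((p+M₁ : ℕ):ℤ)) := by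
            rw [← zpow_add₀ hq.ne']
            congr 1
            push_cast
            ring
    have hYb : Jabs q ν (Y * (q:ℝ)^(-(p:ℤ)))
        ≤ C * (((p+M₂ : ℕ):ℝ) + 1/(1-q)) * (q:ℝ) ^ (-((p+M₂ : ℕ):ℤ)^2) := by
      refine le_trans ?_ (hCb (p + M₂))
      apply Jabs_mono hq hq1 hν (by positivity)
      calc Y * (q:ℝ)^(-(p:ℤ)) ≤ (q:ℝ)^(-(M₂:ℤ)) * (q:ℝ)^(-(p:ℤ)) :=
            mul_le_mul_of_nonneg_right hM₂ hz.le
        _ = (q:ℝ)^(-((p+M₂ : ℕ):ℤ)) := by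
            rw [← zpow_add₀ hq.ne']
            congr 1
            push_cast
            ring
    have hjb : ((q:ℝ)^(-(p:ℤ)))^j = (q:ℝ)^(-((j:ℤ) * p)) := by
      rw [← zpow_natCast ((q:ℝ)^(-(p:ℤ))) j, ← zpow_mul]
      congr 1
      push_cast
      ring
    have hJX0 : 0 ≤ Jabs q ν (X * (q:ℝ)^(-(p:ℤ))) := Jabs_nonneg hq hq1 hν _
    have hJY0 : 0 ≤ Jabs q ν (Y * (q:ℝ)^(-(p:ℤ))) := Jabs_nonneg hq hq1 hν _
    have hE0 : (0:ℝ) < Real.exp (-s * (q:ℝ)^(-2*(p:ℤ))) := Real.exp_pos _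
    unfold dom
    rw [he2, hjb]
    have step : (q:ℝ)^(-((j:ℤ)*p)) * ((q:ℝ)^(-(p:ℤ)) * Real.exp (-s * (q:ℝ)^(-2*(p:ℤ))) *
          Jabs q ν (X * (q:ℝ)^(-(p:ℤ))) * Jabs q ν (Y * (q:ℝ)^(-(p:ℤ))) *
          ((q:ℝ)^(-(p:ℤ))) ^ (2*ν+1))
        ≤ (q:ℝ)^(-((j:ℤ)*p)) * ((q:ℝ)^(-(p:ℤ)) * Real.exp (-s * (q:ℝ)^(-2*(p:ℤ))) *
          (C * (((p+M₁ : ℕ):ℝ) + 1/(1-q)) * (q:ℝ) ^ (-((p+M₁ : ℕ):ℤ)^2)) *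
          (C * (((p+M₂ : ℕ):ℝ) + 1/(1-q)) * (q:ℝ) ^ (-((p+M₂ : ℕ):ℤ)^2)) *
          ((q:ℝ) ^ (-((B:ℤ) * p)))) := by
      have h0 : (0:ℝ) < (q:ℝ)^(-((j:ℤ)*p)) := zpow_pos hq _
      apply mul_le_mul_of_nonneg_left _ h0.le
      have hbc0 : (0:ℝ) ≤ (q:ℝ)^(-(p:ℤ)) * Real.exp (-s * (q:ℝ)^(-2*(p:ℤ))) :=
        mul_nonneg hz.le (Real.exp_pos _).le
      have hdpos : (0:ℝ) < 1/(1-q) := div_pos one_pos (by linarith)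
      have hX'0 : (0:ℝ) ≤ C * (((p+M₁ : ℕ):ℝ) + 1/(1-q)) * (q:ℝ) ^ (-((p+M₁ : ℕ):ℤ)^2) := by
        apply mul_nonneg (mul_nonneg hC0.le ?_) (zpow_pos hq _).le
        have := Nat.cast_nonneg (α := ℝ) (p+M₁)
        linarith
      have hY'0 : (0:ℝ) ≤ C * (((p+M₂ : ℕ):ℝ) + 1/(1-q)) * (q:ℝ) ^ (-((p+M₂ : ℕ):ℤ)^2) := by
        apply mul_nonneg (mul_nonneg hC0.le ?_) (zpow_pos hq _).le
        have := Nat.cast_nonneg (α := ℝ) (p+M₂)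
        linarith
      have m1 : (q:ℝ)^(-(p:ℤ)) * Real.exp (-s * (q:ℝ)^(-2*(p:ℤ))) *
            Jabs q ν (X * (q:ℝ)^(-(p:ℤ)))
          ≤ (q:ℝ)^(-(p:ℤ)) * Real.exp (-s * (q:ℝ)^(-2*(p:ℤ))) *
            (C * (((p+M₁ : ℕ):ℝ) + 1/(1-q)) * (q:ℝ) ^ (-((p+M₁ : ℕ):ℤ)^2)) :=
        mul_le_mul_of_nonneg_left hXb hbc0
      have m2 := mul_le_mul m1 hYb hJY0 (mul_nonneg hbc0 hX'0)
      exact mul_le_mul m2 hrpow (Real.rpow_nonneg hz.le _)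
        (mul_nonneg (mul_nonneg hbc0 hX'0) hY'0)
    refine step.trans (le_of_eq ?_)
    -- now an algebraic identity
    simp only [hD_def]
    rw [div_mul_cancel₀ _ (zpow_ne_zero _ hq.ne' : ((q:ℝ)^(p:ℤ)) ≠ 0)]
    have hE : A * p - ((p:ℤ) + M₁)^2 - ((p:ℤ) + M₂)^2
        = (-(((j:ℤ))*p)) + (-(p:ℤ)) + (-((p+M₁:ℕ):ℤ)^2) + (-((p+M₂:ℕ):ℤ)^2) + (-((B:ℤ)*p)) := by
      simp only [hA_def]
      push_cast
      ring
    rw [hE, zpow_add₀ hq.ne', zpow_add₀ hq.ne', zpow_add₀ hq.ne', zpow_add₀ hq.ne']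
    push_cast
    ring
  have hgeo : Summable (fun p : ℕ => (q:ℝ)^p) := summable_geometric_of_lt_one hq.le hq1
  apply summable_of_isBigO_nat hgeo
  rw [Asymptotics.isBigO_iff]
  refine ⟨C*C, ?_⟩
  filter_upwards [htend.eventually_le_const (by norm_num : (0:ℝ) < 1)] with p hp
  rw [Real.norm_eq_abs, Real.norm_eq_abs,
    abs_of_nonneg (dom_nonneg hq hq1 hν s X Y j _),
    abs_of_nonneg (by positivity : (0:ℝ) ≤ (q:ℝ)^p)]
  calc dom q ν s X Y j (-(p:ℤ)) ≤ (C*C) * (D p * (q:ℝ)^(p:ℤ)) := hbd p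
    _ ≤ (C*C) * (1 * (q:ℝ)^(p:ℤ)) := by
        apply mul_le_mul_of_nonneg_left _ (by positivity)
        apply mul_le_mul_of_nonneg_right hp (zpow_pos hq _).le
    _ = (C*C) * (q:ℝ)^p := by rw [one_mul, zpow_natCast]

lemma master (j : ℕ) (X Y s : ℝ) (hX : 0 ≤ X) (hY : 0 ≤ Y) (hs : 0 < s) :
    Summable (fun m : ℤ => dom q ν s X Y j m) :=
  Summable.of_nat_of_neg (master_pos hq hq1 hν j X Y s hX hY hs)
    (master_neg hq hq1 hν j X Y s hX hY hs)

end master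

section eigen
variable (hq : 0 < q) (hq1 : q < 1) (hν : -1 < ν)
include hq hq1 hν

lemma Jc_rec (k : ℕ) :
    Jc q ν (k+1) * (((q:ℝ)^(2*k+2))⁻¹ - (1 + q^(2*ν : ℝ)) + q^(2*ν : ℝ) * q^(2*k+2))
      = - Jc q ν k := by
  have hrel : (q:ℝ)^(2*ν+2 : ℝ) = q^(2*ν:ℝ) * q^2 := by
    rw [Real.rpow_add hq, Real.rpow_two]
  have hPA : qPochFin (q ^ (2*ν+2 : ℝ)) (q^2) (k+1)
      = qPochFin (q ^ (2*ν+2 : ℝ)) (q^2) k * (1 - q ^ (2*ν+2 : ℝ) * (q^2)^k) :=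
    Finset.prod_range_succ _ k
  have hPB : qPochFin (q^2) (q^2) (k+1) = qPochFin (q^2) (q^2) k * (1 - q^2 * (q^2)^k) :=
    Finset.prod_range_succ _ k
  have hA0 : qPochFin (q ^ (2*ν+2 : ℝ)) (q^2) k ≠ 0 := (pochA_pos hq hq1 hν k).ne'
  have hB0 : qPochFin (q^2) (q^2) k ≠ 0 := (pochB_pos hq hq1 hν k).ne'
  have hexp2 : (q:ℝ)^(2*k+2) = ((q:ℝ)^k)^2 * q^2 := by ring
  have hsplit : (q:ℝ)^((k+1)*(k+1+1)) = q^(k*(k+1)) * (((q:ℝ)^k)^2 * q^2) := by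
    rw [show (k+1)*(k+1+1) = k*(k+1) + (2*k+2) from by ring, pow_add, hexp2]
  have hexp3 : ((q:ℝ)^2)^k = ((q:ℝ)^k)^2 := by
    rw [← pow_mul, mul_comm 2 k, pow_mul]
  have hf1 : (1 : ℝ) - q^(2*ν:ℝ) * q^2 * ((q:ℝ)^k)^2 ≠ 0 := by
    have h1 : q ^ (2*ν+2:ℝ) * (q^2)^k ≤ q ^ (2*ν+2:ℝ) * 1 :=
      mul_le_mul_of_nonneg_left (pow_le_one₀ (by positivity) (by nlinarith)) (ha01 hq hq1 hν).1
    have h2 := (ha01 hq hq1 hν).2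
    have h3 : (0:ℝ) ≤ q ^ (2*ν+2:ℝ) * (q^2)^k :=
      mul_nonneg (ha01 hq hq1 hν).1 (by positivity)
    rw [← hexp3, ← hrel]
    intro h
    nlinarith
  have hf2 : (1 : ℝ) - q^2 * ((q:ℝ)^k)^2 ≠ 0 := by
    have h1 : (q:ℝ)^2 * (q^2)^k ≤ q^2 * 1 :=
      mul_le_mul_of_nonneg_left (pow_le_one₀ (by positivity) (by nlinarith)) (by positivity)
    have h3 : (0:ℝ) ≤ (q:ℝ)^2 * (q^2)^k := by positivity
    rw [← hexp3]
    intro h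
    nlinarith
  have hu0 : (q:ℝ)^k ≠ 0 := by positivity
  have hq0 : (q:ℝ) ≠ 0 := hq.ne'
  have hJk1 : Jc q ν (k+1) = (-1:ℝ)^(k+1) * ((q:ℝ)^(k*(k+1)) * (((q:ℝ)^k)^2*q^2)) /
      ((qPochFin (q^(2*ν+2:ℝ)) (q^2) k * (1 - (q^(2*ν:ℝ)*q^2)*((q:ℝ)^k)^2)) *
       (qPochFin (q^2) (q^2) k * (1 - q^2*((q:ℝ)^k)^2))) := by
    unfold Jc
    rw [hPA, hPB, hsplit, hrel, hexp3]
  have hJck : Jc q ν k = (-1:ℝ)^k * (q:ℝ)^(k*(k+1)) /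
      (qPochFin (q^(2*ν+2:ℝ)) (q^2) k * qPochFin (q^2) (q^2) k) := rfl
  rw [hexp2, hJk1, hJck]
  have huQ : ((q:ℝ)^k)^2 * q^2 ≠ 0 := by positivity
  have hkey : (((q:ℝ)^k)^2 * q^2)⁻¹ - (1 + q^(2*ν:ℝ)) + q^(2*ν:ℝ) * (((q:ℝ)^k)^2 * q^2)
      = (1 - (q^(2*ν:ℝ)*q^2)*((q:ℝ)^k)^2) * (1 - q^2*((q:ℝ)^k)^2) / (((q:ℝ)^k)^2 * q^2) := by
    field_simp
    ring
  rw [hkey, div_mul_div_comm, div_eq_iff (by positivity), neg_mul, div_mul_eq_mul_div,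
    ← neg_div, eq_div_iff (mul_ne_zero hA0 hB0)]
  ring

lemma eigen (z : ℝ) :
    jnu q ν (z / q) - (1 + q^(2*ν : ℝ)) * jnu q ν z + q^(2*ν:ℝ) * jnu q ν (q * z)
      = -(z^2) * jnu q ν z := by
  set α := (q:ℝ)^(2*ν:ℝ) with hα
  have S1 := summable_jnu_term hq hq1 hν (z/q)
  have S2 := summable_jnu_term hq hq1 hν z
  have S3 := summable_jnu_term hq hq1 hν (q*z)
  rw [jnu_eq q ν (z/q), jnu_eq q ν z, jnu_eq q ν (q*z)]
  have hD : Summable (fun k : ℕ => Jc q ν k * (z/q)^(2*k)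
      - (1+α) * (Jc q ν k * z^(2*k)) + α * (Jc q ν k * (q*z)^(2*k))) :=
    (S1.sub (S2.mul_left (1+α))).add (S3.mul_left α)
  have e1 : ∑' k : ℕ, Jc q ν k * (z/q)^(2*k) - (1+α) * ∑' k : ℕ, Jc q ν k * z^(2*k)
        + α * ∑' k : ℕ, Jc q ν k * (q*z)^(2*k)
      = ∑' k : ℕ, (Jc q ν k * (z/q)^(2*k) - (1+α) * (Jc q ν k * z^(2*k))
        + α * (Jc q ν k * (q*z)^(2*k))) := by
    rw [← tsum_mul_left, ← tsum_mul_left,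
      ← Summable.tsum_sub S1 (S2.mul_left (1+α)),
      ← Summable.tsum_add (S1.sub (S2.mul_left (1+α))) (S3.mul_left α)]
  rw [e1]
  -- now compute the series of combinations
  have hstep : ∀ k : ℕ, (Jc q ν (k+1) * (z/q)^(2*(k+1)) - (1+α) * (Jc q ν (k+1) * z^(2*(k+1)))
      + α * (Jc q ν (k+1) * (q*z)^(2*(k+1))))
      = -(z^2) * (Jc q ν k * z^(2*k)) := by
    intro k
    have hrec := Jc_rec hq hq1 hν k
    have h1 : (z/q)^(2*(k+1)) = z^(2*(k+1)) * ((q:ℝ)^(2*k+2))⁻¹ := by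
      rw [div_pow, show 2*(k+1) = 2*k+2 from by ring]
      rw [div_eq_mul_inv]
    have h2 : (q*z)^(2*(k+1)) = z^(2*(k+1)) * (q:ℝ)^(2*k+2) := by
      rw [mul_pow, show 2*(k+1) = 2*k+2 from by ring]
      ring
    have h3 : z^(2*(k+1)) = z^(2*k) * z^2 := by
      rw [show 2*(k+1) = 2*k + 2 from by ring, pow_add]
    rw [h1, h2]
    calc Jc q ν (k+1) * (z^(2*(k+1)) * ((q:ℝ)^(2*k+2))⁻¹)
          - (1+α) * (Jc q ν (k+1) * z^(2*(k+1)))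
          + α * (Jc q ν (k+1) * (z^(2*(k+1)) * (q:ℝ)^(2*k+2)))
        = (Jc q ν (k+1) * (((q:ℝ)^(2*k+2))⁻¹ - (1 + α) + α * (q:ℝ)^(2*k+2))) * z^(2*(k+1)) := by
          ring
      _ = (- Jc q ν k) * z^(2*(k+1)) := by rw [hα, hrec]
      _ = -(z^2) * (Jc q ν k * z^(2*k)) := by rw [h3]; ring
  have hzero : (Jc q ν 0 * (z/q)^(2*0) - (1+α) * (Jc q ν 0 * z^(2*0))
      + α * (Jc q ν 0 * (q*z)^(2*0))) = 0 := by
    simp only [Nat.mul_zero, pow_zero, mul_one]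
    ring
  rw [← Summable.sum_add_tsum_nat_add 1 hD]
  simp only [Finset.range_one, Finset.sum_singleton]
  rw [hzero, zero_add]
  have : ∀ k : ℕ, (Jc q ν (k+1) * (z/q)^(2*(k+1)) - (1+α) * (Jc q ν (k+1) * z^(2*(k+1)))
      + α * (Jc q ν (k+1) * (q*z)^(2*(k+1)))) = -(z^2) * (Jc q ν k * z^(2*k)) := hstep
  calc ∑' k : ℕ, (Jc q ν (k+1) * (z/q)^(2*(k+1)) - (1+α) * (Jc q ν (k+1) * z^(2*(k+1)))
        + α * (Jc q ν (k+1) * (q*z)^(2*(k+1))))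
      = ∑' k : ℕ, -(z^2) * (Jc q ν k * z^(2*k)) := tsum_congr this
    _ = -(z^2) * ∑' k : ℕ, Jc q ν k * z^(2*k) := tsum_mul_left

end eigen
end QFP

open QFP in
theorem q_fokker_planck (q ν xr : ℝ) (hq : 0 < q) (hq1 : q < 1) (hν : -1 < ν)
    (hxr : ∃ r : ℤ, xr = q ^ r)
    (P : ℝ → ℝ → ℝ)
    (hP : ∀ x t, P x t = (cq q ν) ^ 2 * qInt q (fun y =>
      Real.exp (-t * y ^ 2) * jnu q ν (x * y) * jnu q ν (xr * y) * y ^ (2 * ν + 1)))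
    (t : ℝ) (ht : 0 < t) (n : ℤ) :
    HasDerivAt (fun s => P (q ^ n) s) (qBesselOp q ν (fun x => P x t) (q ^ n)) t := by
  obtain ⟨r, hr⟩ := hxr
  have hxr0 : 0 < xr := hr ▸ zpow_pos hq r
  have hqn0 : (0:ℝ) < (q:ℝ) ^ n := zpow_pos hq n
  set A : ℝ := cq q ν ^ 2 * (1 - q) with hA
  set G : ℤ → ℝ → ℝ := fun m s => (q:ℝ)^m * (Real.exp (-s * ((q:ℝ)^m) ^ 2) *
    jnu q ν ((q:ℝ)^n * (q:ℝ)^m) * jnu q ν (xr * (q:ℝ)^m) * ((q:ℝ)^m) ^ (2 * ν + 1)) with hG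
  set G' : ℤ → ℝ → ℝ := fun m s => (q:ℝ)^m * (Real.exp (-s * ((q:ℝ)^m) ^ 2) *
    (-((q:ℝ)^m) ^ 2) * jnu q ν ((q:ℝ)^n * (q:ℝ)^m) * jnu q ν (xr * (q:ℝ)^m) *
    ((q:ℝ)^m) ^ (2 * ν + 1)) with hG'
  -- generic norm bound against the dominating series
  have hbd0 : ∀ (x : ℝ) (s : ℝ), 0 < x → ∀ m : ℤ,
      ‖(q:ℝ)^m * (Real.exp (-s * ((q:ℝ)^m) ^ 2) * jnu q ν (x * (q:ℝ)^m) *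
        jnu q ν (xr * (q:ℝ)^m) * ((q:ℝ)^m) ^ (2 * ν + 1))‖ ≤ dom q ν s x xr 0 m := by
    intro x s hx m
    have hqm : (0:ℝ) < (q:ℝ)^m := zpow_pos hq m
    have hR : (0:ℝ) < ((q:ℝ)^m) ^ (2 * ν + 1 : ℝ) := Real.rpow_pos_of_pos hqm _
    have hj1 : |jnu q ν (x * (q:ℝ)^m)| ≤ Jabs q ν (x * (q:ℝ)^m) := by
      have h := jnu_abs_le hq hq1 hν (x * (q:ℝ)^m)
      rwa [abs_of_pos (mul_pos hx hqm)] at h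
    have hj2 : |jnu q ν (xr * (q:ℝ)^m)| ≤ Jabs q ν (xr * (q:ℝ)^m) := by
      have h := jnu_abs_le hq hq1 hν (xr * (q:ℝ)^m)
      rwa [abs_of_pos (mul_pos hxr0 hqm)] at h
    rw [Real.norm_eq_abs]
    have habs : |(q:ℝ)^m * (Real.exp (-s * ((q:ℝ)^m) ^ 2) * jnu q ν (x * (q:ℝ)^m) *
        jnu q ν (xr * (q:ℝ)^m) * ((q:ℝ)^m) ^ (2 * ν + 1))|
        = (q:ℝ)^m * (Real.exp (-s * ((q:ℝ)^m) ^ 2) * |jnu q ν (x * (q:ℝ)^m)| *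
        |jnu q ν (xr * (q:ℝ)^m)| * ((q:ℝ)^m) ^ (2 * ν + 1)) := by
      simp only [abs_mul]
      rw [abs_of_pos hqm, abs_of_pos (Real.exp_pos _), abs_of_pos hR]
    rw [habs]
    have hEpos : (0:ℝ) < Real.exp (-s * ((q:ℝ)^m) ^ 2) := Real.exp_pos _
    have m1 : Real.exp (-s * ((q:ℝ)^m) ^ 2) * |jnu q ν (x * (q:ℝ)^m)|
        ≤ Real.exp (-s * ((q:ℝ)^m) ^ 2) * Jabs q ν (x * (q:ℝ)^m) :=
      mul_le_mul_of_nonneg_left hj1 hEpos.le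
    have m2 := mul_le_mul m1 hj2 (abs_nonneg _)
      (mul_nonneg hEpos.le (Jabs_nonneg hq hq1 hν _))
    have m3 := mul_le_mul_of_nonneg_right m2 hR.le
    have m4 := mul_le_mul_of_nonneg_left m3 hqm.le
    refine m4.trans (le_of_eq ?_)
    unfold dom
    ring
  have hsummand : ∀ (x : ℝ), 0 < x → Summable (fun m : ℤ =>
      (q:ℝ)^m * (Real.exp (-t * ((q:ℝ)^m) ^ 2) * jnu q ν (x * (q:ℝ)^m) *
        jnu q ν (xr * (q:ℝ)^m) * ((q:ℝ)^m) ^ (2 * ν + 1))) := by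
    intro x hx
    exact Summable.of_norm_bounded (master hq hq1 hν 0 x xr t hx.le hxr0.le ht)
      (hbd0 x t hx)
  -- derivative of each term
  have hder : ∀ (m : ℤ) (y : ℝ), HasDerivAt (G m) (G' m y) y := by
    intro m y
    have h1 : HasDerivAt (fun s : ℝ => -s * ((q:ℝ)^m) ^ 2) (-((q:ℝ)^m) ^ 2) y := by
      simpa using ((hasDerivAt_id y).neg.mul_const (((q:ℝ)^m) ^ 2))
    have h2 := h1.exp
    have h3 := ((h2.mul_const (jnu q ν ((q:ℝ)^n * (q:ℝ)^m))).mul_const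
      (jnu q ν (xr * (q:ℝ)^m))).mul_const (((q:ℝ)^m) ^ (2 * ν + 1 : ℝ))
    have h4 := h3.const_mul ((q:ℝ)^m)
    exact h4
  -- bound for the derivatives on Ioi (t/2)
  have hbnd : ∀ (m : ℤ) (y : ℝ), y ∈ Set.Ioi (t/2) →
      ‖G' m y‖ ≤ dom q ν (t/2) ((q:ℝ)^n) xr 2 m := by
    intro m y hy
    rw [Set.mem_Ioi] at hy
    have hqm : (0:ℝ) < (q:ℝ)^m := zpow_pos hq m
    have hR : (0:ℝ) < ((q:ℝ)^m) ^ (2 * ν + 1 : ℝ) := Real.rpow_pos_of_pos hqm _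
    have hj1 : |jnu q ν ((q:ℝ)^n * (q:ℝ)^m)| ≤ Jabs q ν ((q:ℝ)^n * (q:ℝ)^m) := by
      have h := jnu_abs_le hq hq1 hν ((q:ℝ)^n * (q:ℝ)^m)
      rwa [abs_of_pos (mul_pos hqn0 hqm)] at h
    have hj2 : |jnu q ν (xr * (q:ℝ)^m)| ≤ Jabs q ν (xr * (q:ℝ)^m) := by
      have h := jnu_abs_le hq hq1 hν (xr * (q:ℝ)^m)
      rwa [abs_of_pos (mul_pos hxr0 hqm)] at h
    have hele : Real.exp (-y * ((q:ℝ)^m) ^ 2) ≤ Real.exp (-(t/2) * ((q:ℝ)^m) ^ 2) := by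
      apply Real.exp_le_exp.2
      nlinarith [sq_nonneg ((q:ℝ)^m)]
    rw [Real.norm_eq_abs]
    have habs : |G' m y| = (q:ℝ)^m * (Real.exp (-y * ((q:ℝ)^m) ^ 2) * ((q:ℝ)^m) ^ 2 *
        |jnu q ν ((q:ℝ)^n * (q:ℝ)^m)| * |jnu q ν (xr * (q:ℝ)^m)| *
        ((q:ℝ)^m) ^ (2 * ν + 1)) := by
      simp only [hG', abs_mul, abs_neg]
      rw [abs_of_pos hqm, abs_of_pos (Real.exp_pos _), abs_of_pos hR,
        abs_of_nonneg (sq_nonneg ((q:ℝ)^m))]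
    rw [habs]
    have m1 : Real.exp (-y * ((q:ℝ)^m) ^ 2) * ((q:ℝ)^m) ^ 2
        ≤ Real.exp (-(t/2) * ((q:ℝ)^m) ^ 2) * ((q:ℝ)^m) ^ 2 :=
      mul_le_mul_of_nonneg_right hele (sq_nonneg _)
    have m2 := mul_le_mul m1 hj1 (abs_nonneg _)
      (mul_nonneg (Real.exp_pos _).le (sq_nonneg _))
    have m3 := mul_le_mul m2 hj2 (abs_nonneg _)
      (mul_nonneg (mul_nonneg (Real.exp_pos _).le (sq_nonneg _)) (Jabs_nonneg hq hq1 hν _))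
    have m4 := mul_le_mul_of_nonneg_right m3 hR.le
    have m5 := mul_le_mul_of_nonneg_left m4 hqm.le
    refine m5.trans (le_of_eq ?_)
    unfold dom
    ring
  have hmem : t ∈ Set.Ioi (t/2) := by
    rw [Set.mem_Ioi]
    linarith
  have hg0 : Summable (fun m : ℤ => G m t) := hsummand ((q:ℝ)^n) hqn0
  have H := hasDerivAt_tsum_of_isPreconnected
    (master hq hq1 hν 2 ((q:ℝ)^n) xr (t/2) hqn0.le hxr0.le (by linarith))
    isOpen_Ioi isPreconnected_Ioi
    (fun m y _ => hder m y) hbnd hmem hg0 hmem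
  have H2 : HasDerivAt (fun z : ℝ => A * ∑' m : ℤ, G m z) (A * ∑' m : ℤ, G' m t) t :=
    H.const_mul A
  have hfun_eq : (fun s => P ((q:ℝ)^n) s) = (fun s : ℝ => A * ∑' m : ℤ, G m s) := by
    funext s
    rw [hP]
    unfold qInt
    simp only [hG, hA]
    ring
  rw [hfun_eq]
  convert H2 using 1
  -- the q-Bessel operator identity
  have hne2 : ((q:ℝ)^n) ^ 2 ≠ 0 := pow_ne_zero 2 hqn0.ne'
  have hPx : ∀ x : ℝ, P x t = A * ∑' m : ℤ,
      (q:ℝ)^m * (Real.exp (-t * ((q:ℝ)^m) ^ 2) * jnu q ν (x * (q:ℝ)^m) *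
        jnu q ν (xr * (q:ℝ)^m) * ((q:ℝ)^m) ^ (2 * ν + 1)) := by
    intro x
    rw [hP]
    unfold qInt
    simp only [hA]
    ring
  have S1 := hsummand ((q:ℝ)^n / q) (by positivity)
  have S2 := hsummand ((q:ℝ)^n) hqn0
  have S3 := hsummand (q * (q:ℝ)^n) (by positivity)
  have percomb : ∀ m : ℤ,
      (q:ℝ)^m * (Real.exp (-t * ((q:ℝ)^m) ^ 2) * jnu q ν (((q:ℝ)^n / q) * (q:ℝ)^m) *
        jnu q ν (xr * (q:ℝ)^m) * ((q:ℝ)^m) ^ (2 * ν + 1))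
      - (1 + q ^ (2 * ν)) * ((q:ℝ)^m * (Real.exp (-t * ((q:ℝ)^m) ^ 2) *
        jnu q ν ((q:ℝ)^n * (q:ℝ)^m) * jnu q ν (xr * (q:ℝ)^m) * ((q:ℝ)^m) ^ (2 * ν + 1)))
      + q ^ (2 * ν) * ((q:ℝ)^m * (Real.exp (-t * ((q:ℝ)^m) ^ 2) *
        jnu q ν ((q * (q:ℝ)^n) * (q:ℝ)^m) * jnu q ν (xr * (q:ℝ)^m) *
        ((q:ℝ)^m) ^ (2 * ν + 1)))
      = ((q:ℝ)^n) ^ 2 * G' m t := by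
    intro m
    have heig := eigen hq hq1 hν ((q:ℝ)^n * (q:ℝ)^m)
    have harg1 : ((q:ℝ)^n / q) * (q:ℝ)^m = ((q:ℝ)^n * (q:ℝ)^m) / q := by ring
    have harg3 : (q * (q:ℝ)^n) * (q:ℝ)^m = q * ((q:ℝ)^n * (q:ℝ)^m) := by ring
    rw [harg1, harg3]
    simp only [hG']
    linear_combination ((q:ℝ)^m * Real.exp (-t * ((q:ℝ)^m) ^ 2) *
      jnu q ν (xr * (q:ℝ)^m) * ((q:ℝ)^m) ^ (2 * ν + 1 : ℝ)) * heig
  have hcomb : (∑' m : ℤ, (q:ℝ)^m * (Real.exp (-t * ((q:ℝ)^m) ^ 2) *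
        jnu q ν (((q:ℝ)^n / q) * (q:ℝ)^m) * jnu q ν (xr * (q:ℝ)^m) *
        ((q:ℝ)^m) ^ (2 * ν + 1)))
      - (1 + q ^ (2 * ν)) * (∑' m : ℤ, (q:ℝ)^m * (Real.exp (-t * ((q:ℝ)^m) ^ 2) *
        jnu q ν ((q:ℝ)^n * (q:ℝ)^m) * jnu q ν (xr * (q:ℝ)^m) *
        ((q:ℝ)^m) ^ (2 * ν + 1)))
      + q ^ (2 * ν) * (∑' m : ℤ, (q:ℝ)^m * (Real.exp (-t * ((q:ℝ)^m) ^ 2) *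
        jnu q ν ((q * (q:ℝ)^n) * (q:ℝ)^m) * jnu q ν (xr * (q:ℝ)^m) *
        ((q:ℝ)^m) ^ (2 * ν + 1)))
      = ((q:ℝ)^n) ^ 2 * (∑' m : ℤ, G' m t) := by
    rw [← tsum_mul_left, ← tsum_mul_left,
      ← Summable.tsum_sub S1 (S2.mul_left (1 + q ^ (2 * ν))),
      ← Summable.tsum_add (S1.sub (S2.mul_left (1 + q ^ (2 * ν)))) (S3.mul_left (q ^ (2 * ν)))]
    rw [tsum_congr percomb, tsum_mul_left]
  simp only [qBesselOp]
  rw [hPx, hPx, hPx, div_eq_iff hne2]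
  linear_combination A * hcomb
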